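/- Let B ⊆ ℝ² be a finite nonempty set and let q ∈ ℝ² with q ∉ convexHull(B). Then there exists a ∈ B such that cross(a − q, p − q) ≥ 0 for every p ∈ B, and there exists b ∈ B such that cross(b − q, p − q) ≤ 0 for every p ∈ B. (Both tangent points of B as seen from the external point q exist.) -/

import Mathlib

/-- The planar cross product. -/
def cross (u v : ℝ × ℝ) : ℝ := u.1 * v.2 - u.2 * v.1

/-- Both tangent points of a finite nonempty set `B` as seen from an external point
`q` exist. -/
theorem exists_tangent_points (B : Set (ℝ × ℝ)) (hB : B.Finite) (hBne : B.Nonempty)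
    (q : ℝ × ℝ) (hq : q ∉ convexHull ℝ B) :
    (∃ a ∈ B, ∀ p ∈ B, 0 ≤ cross (a - q) (p - q)) ∧
      (∃ b ∈ B, ∀ p ∈ B, cross (b - q) (p - q) ≤ 0) := by
  obtain ⟨f, u, hfq, hfB⟩ := geometric_hahn_banach_point_closed
    (convex_convexHull ℝ B) (hB.isCompact_convexHull ℝ).isClosed hq
  set w : ℝ × ℝ := (f (1, 0), f (0, 1)) with hw_def
  have hfx : ∀ x : ℝ × ℝ, f x = w.1 * x.1 + w.2 * x.2 := by
    intro x
    have hx : x = x.1 • ((1 : ℝ), (0 : ℝ)) + x.2 • ((0 : ℝ), (1 : ℝ)) := by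
      simp [Prod.ext_iff]
    calc f x = f (x.1 • ((1 : ℝ), (0 : ℝ)) + x.2 • ((0 : ℝ), (1 : ℝ))) := by rw [← hx]
    _ = w.1 * x.1 + w.2 * x.2 := by
        rw [f.map_add, f.map_smul, f.map_smul]; simp [hw_def]; ring
  set d : ℝ × ℝ → ℝ := fun p => w.1 * (p - q).1 + w.2 * (p - q).2 with hd_def
  set s : ℝ × ℝ → ℝ := fun p => cross w (p - q) with hs_def
  have hd : ∀ p ∈ B, 0 < d p := by
    intro p hp
    have h1 : u < f p := hfB p (subset_convexHull ℝ B hp)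
    have h2 : f (p - q) = f p - f q := by rw [f.map_sub]
    have h3 : 0 < f (p - q) := by linarith
    rw [hfx (p - q)] at h3
    simpa [hd_def] using h3
  have hw : 0 < w.1 ^ 2 + w.2 ^ 2 := by
    obtain ⟨p0, hp0⟩ := hBne
    by_contra h
    push_neg at h
    have h1 : w.1 = 0 := by nlinarith [sq_nonneg w.1, sq_nonneg w.2]
    have h2 : w.2 = 0 := by nlinarith [sq_nonneg w.1, sq_nonneg w.2]
    have := hd p0 hp0
    rw [hd_def] at this
    simp only [hw_def] at h1 h2
    simp [hw_def, h1, h2] at this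
  have key : ∀ a p : ℝ × ℝ, cross (a - q) (p - q) * (w.1 ^ 2 + w.2 ^ 2)
      = d a * s p - d p * s a := by
    intro a p
    simp only [hd_def, hs_def, cross, Prod.fst_sub, Prod.snd_sub]
    ring
  constructor
  · obtain ⟨a, ha, hamin⟩ := Set.exists_min_image B (fun p => s p / d p) hB hBne
    refine ⟨a, ha, fun p hp => ?_⟩
    have h1 : s a / d a ≤ s p / d p := hamin p hp
    rw [div_le_div_iff₀ (hd a ha) (hd p hp)] at h1
    nlinarith [key a p, hw]
  · obtain ⟨b, hb, hbmax⟩ := Set.exists_max_image B (fun p => s p / d p) hB hBne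
    refine ⟨b, hb, fun p hp => ?_⟩
    have h1 : s p / d p ≤ s b / d b := hbmax p hp
    rw [div_le_div_iff₀ (hd p hp) (hd b hb)] at h1
    nlinarith [key b p, hw]
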